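/- In the one-dimensional Hegselmann–Krause dynamics with equidistant starting opinions x_i(0) = i − 1 for i = 1, …, n, it holds that x_i(t) = i − 1 for all indices i with t + 1 ≤ i ≤ n − t; in particular for n ≥ 2 the system has not converged before time (n−2)/2. -/

import Mathlib

open Finset

/-- In the equidistant configuration x_i(0) = i (0-indexed), the middle agents
remain at their initial positions: x_i(t) = i whenever t ≤ i and i + t + 1 ≤ n.
In particular, for 2 * t < n - 2 the system has not converged at time t. -/
theorem hk_equidistant_middle_fixed {n : ℕ} (x : Fin n → ℕ → ℝ)
    (hupd : ∀ i t, x i (t + 1) =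
      (∑ j ∈ univ.filter (fun j => |x i t - x j t| ≤ 1), x j t) /
        (univ.filter (fun j => |x i t - x j t| ≤ 1)).card)
    (hinit : ∀ i : Fin n, x i 0 = (i : ℝ)) :
    (∀ t : ℕ, ∀ i : Fin n, t ≤ (i : ℕ) → (i : ℕ) + t + 1 ≤ n → x i t = (i : ℝ)) ∧
      (∀ t : ℕ, 2 * t + 2 < n →
        ¬ (∀ i j : Fin n, x i t = x j t ∨ 1 < |x i t - x j t|)) := by
  have key : ∀ t : ℕ,
      (∀ j : Fin n, t ≤ (j : ℕ) → (j : ℕ) + t + 1 ≤ n → x j t = ((j : ℕ) : ℝ)) ∧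
      (∀ j : Fin n, (j : ℕ) < t → (j : ℕ) + t + 1 ≤ n → x j t < (t : ℝ)) ∧
      (∀ j : Fin n, t ≤ (j : ℕ) → n < (j : ℕ) + t + 1 → (n : ℝ) - 1 - t < x j t) := by
    intro t
    induction t with
    | zero =>
      refine ⟨fun j _ _ => by simpa using hinit j,
        fun j h _ => absurd h (by omega),
        fun j _ h => absurd h (by have := j.isLt; omega)⟩
    | succ t ih =>
      obtain ⟨ih1, ih2, ih3⟩ := ih
      refine ⟨?_, ?_, ?_⟩
      · -- middle agents
        intro i hti hin
        have hn : 2 * t + 3 ≤ n := by omega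
        have h1 : 1 ≤ (i : ℕ) := by omega
        have hc1 : (i : ℕ) + 1 < n := by omega
        set a : Fin n := ⟨(i : ℕ) - 1, by omega⟩ with ha
        set c : Fin n := ⟨(i : ℕ) + 1, hc1⟩ with hc
        have hav : (a : ℕ) = (i : ℕ) - 1 := rfl
        have hcv : (c : ℕ) = (i : ℕ) + 1 := rfl
        have hxa : x a t = (((i : ℕ) - 1 : ℕ) : ℝ) := by
          have := ih1 a (by omega) (by rw [hav]; omega)
          rwa [hav] at this
        have hxi : x i t = ((i : ℕ) : ℝ) := ih1 i (by omega) (by omega)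
        have hxc : x c t = (((i : ℕ) + 1 : ℕ) : ℝ) := by
          have := ih1 c (by omega) (by rw [hcv]; omega)
          rwa [hcv] at this
        have hti' : (t : ℝ) + 1 ≤ ((i : ℕ) : ℝ) := by exact_mod_cast hti
        have hin' : ((i : ℕ) : ℝ) + t + 2 ≤ (n : ℝ) := by exact_mod_cast hin
        have hset : univ.filter (fun k => |x i t - x k t| ≤ 1) = {a, i, c} := by
          ext k
          simp only [mem_filter, mem_univ, true_and, mem_insert, mem_singleton]
          constructor
          · intro hk
            rw [hxi, abs_le] at hk
            obtain ⟨hk1, hk2⟩ := hk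
            rcases Nat.lt_or_ge (k : ℕ) t with h | h
            · exfalso
              have hklt : x k t < (t : ℝ) := ih2 k h (by omega)
              linarith
            · rcases le_or_gt ((k : ℕ) + t + 1) n with h' | h'
              · have hxk : x k t = ((k : ℕ) : ℝ) := ih1 k h h'
                rw [hxk] at hk1 hk2
                have hk1r : ((i : ℕ) : ℝ) ≤ ((k : ℕ) : ℝ) + 1 := by linarith
                have hk2r : ((k : ℕ) : ℝ) ≤ ((i : ℕ) : ℝ) + 1 := by linarith
                have hk1' : (i : ℕ) ≤ (k : ℕ) + 1 := by exact_mod_cast hk1r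
                have hk2' : (k : ℕ) ≤ (i : ℕ) + 1 := by exact_mod_cast hk2r
                have : (k : ℕ) = (i : ℕ) - 1 ∨ (k : ℕ) = (i : ℕ) ∨ (k : ℕ) = (i : ℕ) + 1 := by
                  omega
                rcases this with h | h | h
                · exact Or.inl (Fin.ext (by rw [hav]; exact h))
                · exact Or.inr (Or.inl (Fin.ext h))
                · exact Or.inr (Or.inr (Fin.ext (by rw [hcv]; exact h)))
              · exfalso
                have := ih3 k h h'
                linarith
          · intro hk
            have h1' : (((i : ℕ) - 1 : ℕ) : ℝ) = ((i : ℕ) : ℝ) - 1 := by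
              push_cast [h1]; ring
            rcases hk with rfl | rfl | rfl
            · rw [hxi, hxa, h1', abs_le]; constructor <;> linarith
            · rw [hxi, sub_self, abs_zero]; linarith
            · rw [hxi, hxc, abs_le]; push_cast; constructor <;> linarith
        have hai : a ≠ i := by
          intro h; have := congrArg Fin.val h; rw [hav] at this; omega
        have hac : a ≠ c := by
          intro h; have := congrArg Fin.val h; rw [hav, hcv] at this; omega
        have hic : i ≠ c := by
          intro h; have := congrArg Fin.val h; rw [hcv] at this; omega
        rw [hupd i t, hset]
        rw [sum_insert (by simp [hai, hac]), sum_insert (by simp [hic]), sum_singleton,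
          card_insert_of_notMem (by simp [hai, hac]),
          card_insert_of_notMem (by simp [hic]), card_singleton]
        rw [hxa, hxi, hxc]
        have h1' : (((i : ℕ) - 1 : ℕ) : ℝ) = ((i : ℕ) : ℝ) - 1 := by push_cast [h1]; ring
        rw [h1']
        push_cast
        ring
      · -- left boundary
        intro j hjt hjn
        have hub : x j t ≤ (t : ℝ) := by
          rcases Nat.lt_or_ge (j : ℕ) t with h | h
          · exact le_of_lt (ih2 j h (by omega))
          · have hjeq : (j : ℕ) = t := by omega
            rw [ih1 j (by omega) (by omega), hjeq]
        set S := univ.filter (fun k => |x j t - x k t| ≤ 1) with hS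
        have hjS : j ∈ S := by simp [hS]
        have hcard : 0 < S.card := card_pos.mpr ⟨j, hjS⟩
        have hsum : ∑ k ∈ S, x k t < (S.card : ℝ) * ((t : ℝ) + 1) := by
          calc ∑ k ∈ S, x k t < ∑ _k ∈ S, ((t : ℝ) + 1) := by
                apply sum_lt_sum
                · intro k hk
                  rw [hS, mem_filter] at hk
                  have := abs_le.mp hk.2
                  linarith [this.1]
                · exact ⟨j, hjS, by linarith⟩
            _ = (S.card : ℝ) * ((t : ℝ) + 1) := by rw [sum_const, nsmul_eq_mul]
        rw [hupd j t, ← hS, div_lt_iff₀ (by exact_mod_cast hcard)]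
        push_cast
        linarith
      · -- right boundary
        intro j hjt hjn
        have hlb : (n : ℝ) - 1 - t ≤ x j t := by
          rcases le_or_gt ((j : ℕ) + t + 1) n with h | h
          · rw [ih1 j (by omega) h]
            have hje : n = (j : ℕ) + t + 1 := by omega
            have : (n : ℝ) = ((j : ℕ) : ℝ) + t + 1 := by exact_mod_cast hje
            linarith
          · exact le_of_lt (ih3 j (by omega) h)
        set S := univ.filter (fun k => |x j t - x k t| ≤ 1) with hS
        have hjS : j ∈ S := by simp [hS]
        have hcard : 0 < S.card := card_pos.mpr ⟨j, hjS⟩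
        have hsum : (S.card : ℝ) * ((n : ℝ) - 2 - t) < ∑ k ∈ S, x k t := by
          calc (S.card : ℝ) * ((n : ℝ) - 2 - t) = ∑ _k ∈ S, ((n : ℝ) - 2 - t) := by
                rw [sum_const, nsmul_eq_mul]
            _ < ∑ k ∈ S, x k t := by
                apply sum_lt_sum
                · intro k hk
                  rw [hS, mem_filter] at hk
                  have := abs_le.mp hk.2
                  linarith [this.2]
                · exact ⟨j, hjS, by linarith⟩
        rw [hupd j t, ← hS, lt_div_iff₀ (by exact_mod_cast hcard)]
        push_cast
        linarith
  constructor
  · intro t i h1 h2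
    exact (key t).1 i h1 h2
  · intro t ht hconv
    have htn : t < n := by omega
    have htn1 : t + 1 < n := by omega
    have hxa : x ⟨t, htn⟩ t = (t : ℝ) := by
      have := (key t).1 ⟨t, htn⟩ (le_refl t) (show t + t + 1 ≤ n by omega)
      simpa using this
    have hxb : x ⟨t + 1, htn1⟩ t = (t : ℝ) + 1 := by
      have := (key t).1 ⟨t + 1, htn1⟩ (Nat.le_succ t) (show t + 1 + t + 1 ≤ n by omega)
      push_cast at this
      simpa using this
    rcases hconv ⟨t, htn⟩ ⟨t + 1, htn1⟩ with h | h
    · rw [hxa, hxb] at h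
      linarith
    · rw [hxa, hxb, show (t : ℝ) - ((t : ℝ) + 1) = -1 by ring] at h
      norm_num at h
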